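/- Let M be a t × t matrix over Z_m with rank(M) = r. Then there exists a set of at most r · log m columns of M that spans all the columns of M (i.e., every column of M is a Z_m-linear combination of columns in this set), where log denotes logarithm base 2. -/

import Mathlib

/-- The rank of a square matrix over `ZMod m`: the smallest `r` such that `M = A * B`
with `A` a `t × r` matrix and `B` an `r × t` matrix. -/
noncomputable def mrank {m t : ℕ} (M : Matrix (Fin t) (Fin t) (ZMod m)) : ℕ :=
  sInf {r : ℕ | ∃ (A : Matrix (Fin t) (Fin r) (ZMod m)) (B : Matrix (Fin r) (Fin t) (ZMod m)),
    M = A * B}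

lemma greedy_span {m t : ℕ} [NeZero m] (V : Finset (Fin t → ZMod m)) :
    ∃ S ⊆ V, Submodule.span (ZMod m) (S : Set (Fin t → ZMod m)) =
        Submodule.span (ZMod m) (V : Set (Fin t → ZMod m)) ∧
      2 ^ S.card ≤ Nat.card (Submodule.span (ZMod m) (V : Set (Fin t → ZMod m))) := by
  classical
  induction V using Finset.induction_on with
  | empty =>
    refine ⟨∅, Finset.Subset.refl _, rfl, ?_⟩
    simpa using Nat.card_pos (α := Submodule.span (ZMod m) ((∅ : Finset (Fin t → ZMod m)) : Set _))
  | insert _ _ ha ih =>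
    rename_i a V
    obtain ⟨S, hSV, hspan, hcard⟩ := ih
    by_cases h : a ∈ Submodule.span (ZMod m) (V : Set (Fin t → ZMod m))
    · refine ⟨S, hSV.trans (Finset.subset_insert a V), ?_, ?_⟩
      · rw [Finset.coe_insert, Submodule.span_insert_eq_span h, hspan]
      · rw [Finset.coe_insert, Submodule.span_insert_eq_span h]
        exact hcard
    · refine ⟨insert a S, Finset.insert_subset_insert a hSV, ?_, ?_⟩
      · rw [Finset.coe_insert, Finset.coe_insert, Submodule.span_insert,
          Submodule.span_insert, hspan]
      · have haS : a ∉ S := fun hx => h (hspan ▸ Submodule.subset_span (show a ∈ (S : Set (Fin t → ZMod m)) from hx))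
        rw [Finset.card_insert_of_notMem haS, pow_succ, mul_comm]
        have hle : Submodule.span (ZMod m) (V : Set (Fin t → ZMod m)) ≤
            Submodule.span (ZMod m) ((insert a V : Finset _) : Set (Fin t → ZMod m)) := by
          apply Submodule.span_mono
          rw [Finset.coe_insert]
          exact Set.subset_insert _ _
        have hamem : a ∈ Submodule.span (ZMod m) ((insert a V : Finset _) : Set (Fin t → ZMod m)) := by
          apply Submodule.subset_span
          rw [Finset.coe_insert]; exact Set.mem_insert _ _
        set N := Submodule.span (ZMod m) (V : Set (Fin t → ZMod m))
        set N' := Submodule.span (ZMod m) ((insert a V : Finset _) : Set (Fin t → ZMod m))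
        let f : N ⊕ N → N' := Sum.elim (fun x => ⟨x, hle x.2⟩) (fun x => ⟨a + x, N'.add_mem hamem (hle x.2)⟩)
        have hf : Function.Injective f := by
          rintro (x | x) (y | y) hxy <;> simp only [f, Sum.elim_inl, Sum.elim_inr,
            Subtype.mk.injEq] at hxy
          · exact congrArg Sum.inl (Subtype.ext hxy)
          · exact absurd (show a ∈ N by
              have : a = (x : Fin t → ZMod m) - y := by rw [hxy]; ring
              rw [this]; exact N.sub_mem x.2 y.2) h
          · exact absurd (show a ∈ N by
              have : a = (y : Fin t → ZMod m) - x := by rw [← hxy]; ring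
              rw [this]; exact N.sub_mem y.2 x.2) h
          · exact congrArg Sum.inr (Subtype.ext (by exact add_left_cancel hxy))
        have hcard2 : Nat.card (N ⊕ N) ≤ Nat.card N' := Nat.card_le_card_of_injective f hf
        rw [Nat.card_sum] at hcard2
        calc 2 * 2 ^ S.card ≤ 2 * Nat.card N := by omega
          _ = Nat.card N + Nat.card N := by ring
          _ ≤ Nat.card N' := hcard2

/-- Claim 4.4: there are at most `rank(M) · log m` columns of `M` spanning all columns of `M`. -/
theorem exists_spanning_columns (m t : ℕ) (hm : 2 ≤ m) (M : Matrix (Fin t) (Fin t) (ZMod m)) :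
    ∃ S : Finset (Fin t), (S.card : ℝ) ≤ (mrank M : ℝ) * Real.logb 2 (m : ℝ) ∧
      ∀ j : Fin t, (fun i => M i j) ∈
        Submodule.span (ZMod m) ((fun j' => fun i => M i j') '' (S : Set (Fin t))) := by
  classical
  haveI : NeZero m := ⟨by omega⟩
  set r := mrank M with hr
  have hmem : r ∈ {r : ℕ | ∃ (A : Matrix (Fin t) (Fin r) (ZMod m))
      (B : Matrix (Fin r) (Fin t) (ZMod m)), M = A * B} := by
    rw [hr]
    exact Nat.sInf_mem ⟨t, M, 1, (Matrix.mul_one M).symm⟩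
  obtain ⟨A, B, hAB⟩ := hmem
  set col : Fin t → (Fin t → ZMod m) := fun j i => M i j with hcol
  set V : Finset (Fin t → ZMod m) := Finset.image col Finset.univ with hV
  obtain ⟨T, hTV, hspan, hcard⟩ := greedy_span (m := m) (t := t) V
  -- bound Nat.card of span V by m ^ r
  have hle : Submodule.span (ZMod m) (V : Set (Fin t → ZMod m)) ≤
      LinearMap.range (Matrix.mulVecLin A) := by
    rw [Submodule.span_le]
    intro v hv
    simp only [hV, Finset.coe_image, Finset.coe_univ, Set.image_univ, Set.mem_range] at hv
    obtain ⟨j, rfl⟩ := hv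
    refine ⟨fun k => B k j, ?_⟩
    funext i
    simp [Matrix.mulVecLin_apply, Matrix.mulVec, dotProduct, hcol, hAB, Matrix.mul_apply]
  have h1 : Nat.card (Submodule.span (ZMod m) (V : Set (Fin t → ZMod m))) ≤
      Nat.card (LinearMap.range (Matrix.mulVecLin A)) :=
    Nat.card_le_card_of_injective _ (Submodule.inclusion_injective hle)
  have h2 : Nat.card (LinearMap.range (Matrix.mulVecLin A)) ≤ Nat.card (Fin r → ZMod m) :=
    Nat.card_le_card_of_surjective _ (Matrix.mulVecLin A).surjective_rangeRestrict
  have h3 : Nat.card (Fin r → ZMod m) = m ^ r := by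
    simp [Nat.card_fun, Nat.card_zmod]
  have hpow : 2 ^ T.card ≤ m ^ r := by
    omega
  -- choose index set
  have hexists : ∀ v ∈ T, ∃ j : Fin t, col j = v := by
    intro v hv
    have := hTV hv
    simp only [hV, Finset.mem_image, Finset.mem_univ, true_and] at this
    exact this
  set S : Finset (Fin t) := T.attach.image (fun v => Classical.choose (hexists v.1 v.2)) with hS
  have hScard : S.card ≤ T.card := by
    calc S.card ≤ T.attach.card := Finset.card_image_le
      _ = T.card := Finset.card_attach
  have hset : (fun j' => fun i => M i j') '' (S : Set (Fin t)) = (T : Set (Fin t → ZMod m)) := by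
    ext v
    constructor
    · rintro ⟨j, hj, rfl⟩
      simp only [hS, Finset.coe_image, Set.mem_image, Finset.mem_coe, Finset.mem_attach,
        true_and] at hj
      obtain ⟨w, hw⟩ := hj
      have hcs := Classical.choose_spec (hexists w.1 w.2)
      show col _ ∈ (T : Set (Fin t → ZMod m))
      rw [← hw, hcs]
      exact w.2
    · intro hv
      refine ⟨Classical.choose (hexists v hv), ?_, ?_⟩
      · simp only [hS, Finset.coe_image, Set.mem_image]
        exact ⟨⟨v, hv⟩, Finset.mem_coe.2 (Finset.mem_attach _ _), rfl⟩
      · exact Classical.choose_spec (hexists v hv)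
  refine ⟨S, ?_, ?_⟩
  · have hreal : (2 : ℝ) ^ T.card ≤ (m : ℝ) ^ r := by exact_mod_cast hpow
    have hlog : (T.card : ℝ) ≤ (r : ℝ) * Real.logb 2 (m : ℝ) := by
      have := Real.logb_le_logb_of_le (b := 2) (by norm_num) (by positivity : (0:ℝ) < 2 ^ T.card) hreal
      rwa [Real.logb_pow, Real.logb_pow, Real.logb_self_eq_one (by norm_num),
        mul_one] at this
    calc (S.card : ℝ) ≤ (T.card : ℝ) := by exact_mod_cast hScard
      _ ≤ (r : ℝ) * Real.logb 2 (m : ℝ) := hlog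
  · intro j
    rw [hset, hspan]
    exact Submodule.subset_span (by
      simp only [hV, Finset.coe_image, Finset.coe_univ, Set.image_univ, Set.mem_range]
      exact ⟨j, rfl⟩)
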